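/- If F is a connected irregular graph with maximum degree Δ ≥ 2 and vertex cover number τ(F) > |E(F)|/Δ, then the fractional matching number satisfies ν*(F) > |E(F)|/Δ. -/

import Mathlib

open scoped Classical

/-- `S` is a vertex cover of `G`. -/
def IsVertexCover {V : Type*} (G : SimpleGraph V) (S : Finset V) : Prop :=
  ∀ ⦃v w : V⦄, G.Adj v w → v ∈ S ∨ w ∈ S

/-- The vertex cover number `τ(G)`. -/
noncomputable def vertexCoverNumber {V : Type*} [Fintype V] (G : SimpleGraph V) : ℕ :=
  sInf {n : ℕ | ∃ S : Finset V, IsVertexCover G S ∧ S.card = n}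

/-- `w` is a fractional matching of `G`: weights in `[0,1]` on the edges, with total weight
at most `1` at every vertex. -/
def IsFractionalMatching {V : Type*} [Fintype V] [DecidableEq V] (G : SimpleGraph V)
    [DecidableRel G.Adj] (w : Sym2 V → ℝ) : Prop :=
  (∀ e, 0 ≤ w e ∧ w e ≤ 1) ∧ (∀ e, e ∉ G.edgeSet → w e = 0) ∧
    ∀ v : V, ∑ e ∈ G.incidenceFinset v, w e ≤ 1

/-- The fractional matching number `ν*(G)`: the supremum of the total weight of a
fractional matching. -/
noncomputable def fracMatchingNumber {V : Type*} [Fintype V] [DecidableEq V]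
    (G : SimpleGraph V) [DecidableRel G.Adj] : ℝ :=
  sSup {s : ℝ | ∃ w : Sym2 V → ℝ, IsFractionalMatching G w ∧ s = ∑ e ∈ G.edgeFinset, w e}


section Aux
open SimpleGraph Finset

variable {V : Type*} [Fintype V] [DecidableEq V] (F : SimpleGraph V) [DecidableRel F.Adj]

/-- Alternating perturbation along a walk. -/
noncomputable def pw : ∀ {a b : V}, F.Walk a b → ℝ → Sym2 V → ℝ
  | _, _, SimpleGraph.Walk.nil, _, _ => 0
  | a, _, SimpleGraph.Walk.cons (v := c) _ p, ε, e =>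
      (if e = s(a, c) then ε else 0) + pw p (-ε) e

lemma pw_cons {a c b : V} (h : F.Adj a c) (q : F.Walk c b) (ε : ℝ) (e : Sym2 V) :
    pw F (SimpleGraph.Walk.cons h q) ε e = (if e = s(a, c) then ε else 0) + pw F q (-ε) e := by
  simp [pw]

lemma pw_nil {a : V} (ε : ℝ) (e : Sym2 V) : pw F (SimpleGraph.Walk.nil (u := a)) ε e = 0 := by
  simp [pw]

lemma pw_not_edge {a b : V} (p : F.Walk a b) :
    ∀ (ε : ℝ) (e : Sym2 V), e ∉ F.edgeSet → pw F p ε e = 0 := by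
  induction p with
  | nil => intro ε e _; rw [pw_nil]
  | @cons a c b h q ih =>
    intro ε e he
    have hne : e ≠ s(a, c) := by rintro rfl; exact he h
    rw [pw_cons, if_neg hne, ih (-ε) e he, add_zero]

lemma pw_abs_le {a b : V} (p : F.Walk a b) :
    ∀ (ε : ℝ) (e : Sym2 V), |pw F p ε e| ≤ p.length * |ε| := by
  induction p with
  | nil => intro ε e; rw [pw_nil]; simp
  | @cons a c b h q ih =>
    intro ε e
    have h1 : |(if e = s(a, c) then ε else 0)| ≤ |ε| := by
      split <;> simp [abs_nonneg]
    calc |pw F (SimpleGraph.Walk.cons h q) ε e|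
        ≤ |(if e = s(a, c) then ε else 0)| + |pw F q (-ε) e| := by
          rw [pw_cons]; exact abs_add_le _ _
      _ ≤ |ε| + q.length * |(-ε)| := add_le_add h1 (ih (-ε) e)
      _ = (q.length + 1) * |ε| := by rw [abs_neg]; ring
      _ = (SimpleGraph.Walk.cons h q).length * |ε| := by
          rw [SimpleGraph.Walk.length_cons]; push_cast; ring

lemma sum_pw_edgeFinset {a b : V} (p : F.Walk a b) :
    ∀ ε : ℝ, ∑ e ∈ F.edgeFinset, pw F p ε e = if Odd p.length then ε else 0 := by
  induction p with
  | nil => intro ε; simp [pw_nil]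
  | @cons a c b h q ih =>
    intro ε
    have hmem : s(a, c) ∈ F.edgeFinset := by simpa [mem_edgeFinset] using h
    rw [SimpleGraph.Walk.length_cons]
    rw [Finset.sum_congr rfl fun e _ => pw_cons F h q ε e, Finset.sum_add_distrib,
      Finset.sum_ite_eq' F.edgeFinset s(a, c) (fun _ => ε), if_pos hmem, ih (-ε)]
    rcases Nat.even_or_odd q.length with he | ho
    · have h1 : ¬ Odd q.length := Nat.not_odd_iff_even.mpr he
      rw [if_neg h1, if_pos (Nat.odd_add_one.mpr h1), add_zero]
    · rw [if_pos ho, if_neg (by rw [Nat.odd_add_one]; exact not_not_intro ho)]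
      ring

lemma sum_pw_incidence {a b : V} (p : F.Walk a b) :
    ∀ (ε : ℝ) (x : V), ∑ e ∈ F.incidenceFinset x, pw F p ε e
      = (if x = a then ε else 0)
        + (if x = b then (if Odd p.length then ε else -ε) else 0) := by
  induction p with
  | nil =>
    intro ε x
    simp only [pw_nil, SimpleGraph.Walk.length_nil, Finset.sum_const_zero]
    have : ¬ Odd 0 := by decide
    simp only [this, ↓reduceIte]
    split <;> ring
  | @cons a c b h q ih =>
    intro ε x
    have hmem : s(a, c) ∈ F.incidenceFinset x ↔ (x = a ∨ x = c) := by
      rw [SimpleGraph.mem_incidenceFinset, SimpleGraph.mk'_mem_incidenceSet_iff]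
      exact ⟨fun ⟨_, h2⟩ => h2, fun h2 => ⟨h, h2⟩⟩
    have hac : a ≠ c := h.ne
    rw [Finset.sum_congr rfl fun e _ => pw_cons F h q ε e, Finset.sum_add_distrib,
      Finset.sum_ite_eq' (F.incidenceFinset x) s(a, c) (fun _ => ε), ih (-ε) x,
      SimpleGraph.Walk.length_cons]
    have hpar : (if Odd (q.length + 1) then ε else -ε)
        = (if Odd q.length then -ε else - -ε) := by
      rcases Nat.even_or_odd q.length with he | ho
      · have h1 : ¬ Odd q.length := Nat.not_odd_iff_even.mpr he
        rw [if_neg h1, if_pos (Nat.odd_add_one.mpr h1), neg_neg]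
      · rw [if_pos ho, if_neg (by rw [Nat.odd_add_one]; exact not_not_intro ho)]
    rw [hpar]
    by_cases hxa : x = a <;> by_cases hxc : x = c
    · exact absurd (hxa.symm.trans hxc) hac
    · simp [hmem, hxa, hxc, hac, Ne.symm hac]
    · simp [hmem, hxa, hxc, hac, Ne.symm hac]
    · simp [hmem, hxa, hxc, hac, Ne.symm hac]

end Aux

/-- If `F` is a connected irregular graph with maximum degree `Δ ≥ 2`
and vertex cover number `τ(F) > |E(F)|/Δ`, then `ν*(F) > |E(F)|/Δ`. -/
theorem stmt2 {V : Type*} [Fintype V] [DecidableEq V] (F : SimpleGraph V)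
    [DecidableRel F.Adj] (hconn : F.Connected) (hΔ : 2 ≤ F.maxDegree)
    (hirr : ∃ v : V, F.degree v ≠ F.maxDegree)
    (hτ : F.edgeFinset.card < F.maxDegree * vertexCoverNumber F) :
    (F.edgeFinset.card : ℝ) / F.maxDegree < fracMatchingNumber F := by
  classical
  obtain ⟨u, huir⟩ := hirr
  have hu : F.degree u < F.maxDegree := lt_of_le_of_ne (F.degree_le_maxDegree u) huir
  have hΔR : (2:ℝ) ≤ (F.maxDegree : ℝ) := by exact_mod_cast hΔ
  have hΔ0 : (0:ℝ) < (F.maxDegree : ℝ) := by linarith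
  have hbdd : BddAbove {s : ℝ | ∃ w : Sym2 V → ℝ,
      IsFractionalMatching F w ∧ s = ∑ e ∈ F.edgeFinset, w e} := by
    refine ⟨(F.edgeFinset.card : ℝ), ?_⟩
    rintro s ⟨w, ⟨hw01, _, _⟩, rfl⟩
    calc ∑ e ∈ F.edgeFinset, w e ≤ ∑ _e ∈ F.edgeFinset, (1:ℝ) :=
          Finset.sum_le_sum fun e _ => (hw01 e).2
      _ = F.edgeFinset.card := by simp
  by_cases hA : ∃ v : V, F.degree v < F.maxDegree ∧ ∃ p : F.Walk u v, Odd p.length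
  · obtain ⟨v, hv, p, hodd⟩ := hA
    set Δ : ℝ := (F.maxDegree : ℝ) with hΔdef
    set n : ℝ := (p.length : ℝ) with hndef
    have hn0 : 0 ≤ n := by positivity
    set ε : ℝ := 1 / (2 * Δ * (n + 1)) with hεdef
    have hε0 : 0 < ε := by rw [hεdef]; positivity
    have hnε : n * ε ≤ 1 / (2 * Δ) := by
      rw [hεdef, mul_one_div, div_le_div_iff₀ (by positivity) (by positivity)]
      nlinarith
    have h2ε : 2 * ε ≤ 1 / Δ := by
      rw [hεdef, mul_one_div, div_le_div_iff₀ (by positivity) (by positivity)]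
      nlinarith
    have hhalf : (1:ℝ) / (2 * Δ) ≤ 1 / Δ := one_div_le_one_div_of_le hΔ0 (by linarith)
    have hquarter : (1:ℝ) / (2 * Δ) ≤ 1 / 4 :=
      one_div_le_one_div_of_le (by norm_num) (by linarith)
    have hΔhalf : (1:ℝ) / Δ ≤ 1 / 2 := one_div_le_one_div_of_le (by norm_num) hΔR
    set w : Sym2 V → ℝ := fun e => (if e ∈ F.edgeSet then 1 / Δ else 0) + pw F p ε e with hwdef
    have habs : ∀ e : Sym2 V, |pw F p ε e| ≤ 1 / (2 * Δ) := by
      intro e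
      refine le_trans (le_trans (pw_abs_le F p ε e) ?_) hnε
      rw [abs_of_pos hε0, ← hndef]
    have hfm : IsFractionalMatching F w := by
      refine ⟨fun e => ?_, fun e he => ?_, fun x => ?_⟩
      · have h1 := abs_le.1 (habs e)
        by_cases he : e ∈ F.edgeSet
        · simp only [hwdef, if_pos he]
          constructor
          · linarith [h1.1, hhalf]
          · linarith [h1.2, hquarter, hΔhalf]
        · simp only [hwdef, if_neg he, pw_not_edge F p ε e he, add_zero]
          norm_num
      · simp only [hwdef, if_neg he, pw_not_edge F p ε e he, add_zero]
      · have hsum1 : ∑ e ∈ F.incidenceFinset x, (if e ∈ F.edgeSet then 1/Δ else 0)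
            = F.degree x * (1/Δ) := by
          rw [Finset.sum_congr rfl fun e he => if_pos
            ((F.mem_incidenceFinset x e).1 he).1, Finset.sum_const,
            F.card_incidenceFinset_eq_degree, nsmul_eq_mul]
        have hsum2 := sum_pw_incidence F p ε x
        rw [if_pos hodd] at hsum2
        have hsplit : ∑ e ∈ F.incidenceFinset x, w e
            = F.degree x * (1/Δ)
              + ((if x = u then ε else 0) + (if x = v then ε else 0)) := by
          simp only [hwdef]
          rw [Finset.sum_add_distrib, hsum1, hsum2]
        rw [hsplit]
        have hdegle : (F.degree x : ℝ) ≤ Δ := by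
          rw [hΔdef]; exact_mod_cast F.degree_le_maxDegree x
        have hΔinv : Δ * (1/Δ) = 1 := by field_simp
        by_cases hxuv : x = u ∨ x = v
        · have hdx : (F.degree x : ℝ) ≤ Δ - 1 := by
            have : F.degree x < F.maxDegree := by
              rcases hxuv with h | h <;> rw [h] <;> [exact hu; exact hv]
            have : (F.degree x : ℝ) + 1 ≤ (F.maxDegree : ℝ) := by exact_mod_cast this
            rw [hΔdef]; linarith
          have hper : (if x = u then ε else 0) + (if x = v then ε else 0) ≤ 2 * ε := by
            split <;> split <;> linarith
          have h1 : (F.degree x : ℝ) * (1/Δ) ≤ (Δ - 1) * (1/Δ) :=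
            mul_le_mul_of_nonneg_right hdx (by positivity)
          have h2 : (Δ - 1) * (1/Δ) = 1 - 1/Δ := by field_simp
          linarith [h2ε]
        · push_neg at hxuv
          rw [if_neg hxuv.1, if_neg hxuv.2]
          have h1 : (F.degree x : ℝ) * (1/Δ) ≤ Δ * (1/Δ) :=
            mul_le_mul_of_nonneg_right hdegle (by positivity)
          linarith
    have htot : ∑ e ∈ F.edgeFinset, w e = F.edgeFinset.card * (1/Δ) + ε := by
      simp only [hwdef]
      rw [Finset.sum_add_distrib, sum_pw_edgeFinset F p ε, if_pos hodd,
        Finset.sum_congr rfl fun e he => if_pos (SimpleGraph.mem_edgeFinset.1 he),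
        Finset.sum_const, nsmul_eq_mul]
    have hle : ∑ e ∈ F.edgeFinset, w e ≤ fracMatchingNumber F :=
      le_csSup hbdd ⟨w, hfm, rfl⟩
    rw [htot] at hle
    rw [div_eq_mul_one_div]
    linarith
  · exfalso
    push_neg at hA
    set Bs : Finset V := Finset.univ.filter (fun x => ∃ p : F.Walk u x, Odd p.length)
      with hBsdef
    have hmemB : ∀ x : V, x ∈ Bs ↔ ∃ p : F.Walk u x, Odd p.length := by
      intro x; simp [hBsdef]
    have hnotboth : ∀ a b : V, F.Adj a b → a ∈ Bs → b ∈ Bs → False := by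
      intro a b hab ha hb
      obtain ⟨pa, hpa⟩ := (hmemB a).1 ha
      obtain ⟨pb, hpb⟩ := (hmemB b).1 hb
      refine hA u hu
        (pa.append ((SimpleGraph.Walk.cons hab SimpleGraph.Walk.nil).append pb.reverse)) ?_
      rw [SimpleGraph.Walk.length_append, SimpleGraph.Walk.length_append,
        SimpleGraph.Walk.length_cons, SimpleGraph.Walk.length_nil,
        SimpleGraph.Walk.length_reverse]
      rw [Nat.odd_iff] at hpa hpb ⊢
      omega
    have hcov : ∀ a b : V, F.Adj a b → a ∈ Bs ∨ b ∈ Bs := by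
      intro a b hab
      obtain ⟨q⟩ := hconn.preconnected u a
      rcases Nat.even_or_odd q.length with he | ho
      · refine Or.inr ((hmemB b).2 ⟨q.concat hab, ?_⟩)
        rw [SimpleGraph.Walk.length_concat, Nat.odd_iff]
        rw [Nat.even_iff] at he; omega
      · exact Or.inl ((hmemB a).2 ⟨q, ho⟩)
    have hdeg : ∀ x ∈ Bs, F.degree x = F.maxDegree := by
      intro x hx
      by_contra hne
      obtain ⟨p, hp⟩ := (hmemB x).1 hx
      exact hA x (lt_of_le_of_ne (F.degree_le_maxDegree x) hne) p hp
    have hpart : F.edgeFinset = Bs.biUnion (fun v => F.incidenceFinset v) := by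
      ext e
      induction e using Sym2.ind with
      | _ a b =>
        simp only [Finset.mem_biUnion]
        constructor
        · intro he
          have hab : F.Adj a b := by
            rwa [SimpleGraph.mem_edgeFinset, SimpleGraph.mem_edgeSet] at he
          rcases hcov a b hab with h1 | h1
          · exact ⟨a, h1, by
              rw [SimpleGraph.mem_incidenceFinset]
              exact (SimpleGraph.mk'_mem_incidenceSet_iff F).2 ⟨hab, Or.inl rfl⟩⟩
          · exact ⟨b, h1, by
              rw [SimpleGraph.mem_incidenceFinset]
              exact (SimpleGraph.mk'_mem_incidenceSet_iff F).2 ⟨hab, Or.inr rfl⟩⟩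
        · rintro ⟨x, _, hx⟩
          rw [SimpleGraph.mem_incidenceFinset] at hx
          exact SimpleGraph.mem_edgeFinset.2 hx.1
    have hdisj : ∀ x ∈ Bs, ∀ y ∈ Bs, x ≠ y →
        Disjoint (F.incidenceFinset x) (F.incidenceFinset y) := by
      intro x hx y hy hxy
      rw [Finset.disjoint_left]
      intro e hex hey
      rw [SimpleGraph.mem_incidenceFinset] at hex hey
      exact hnotboth x y (SimpleGraph.adj_of_mem_incidenceSet F hxy hex hey) hx hy
    have hcard : F.edgeFinset.card = F.maxDegree * Bs.card := by
      rw [hpart, Finset.card_biUnion hdisj,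
        Finset.sum_congr rfl fun x hx => by
          rw [F.card_incidenceFinset_eq_degree, hdeg x hx],
        Finset.sum_const, smul_eq_mul, mul_comm]
    have hτle : vertexCoverNumber F ≤ Bs.card :=
      Nat.sInf_le ⟨Bs, by intro a b hab; exact hcov a b hab, rfl⟩
    have := Nat.mul_le_mul_left F.maxDegree hτle
    omega
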